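/- The sequential remove operation on a sorted linked list preserves sortedness and correctly updates the represented set: if remove(v) is executed on a strictly increasing list representing q (locating the first node with value ≥ v and unlinking it when its value equals v), then the resulting list is strictly increasing and represents q \ {v}, and remove returns true iff v ∈ q. -/

import Mathlib

abbrev E := WithBot (WithTop ℤ)

def iE (v : ℤ) : E := ((v : WithTop ℤ) : E)

/-- Sequential remove: locate the first position whose value is `≥ v`;
if the value there equals `v`, unlink it and return `true`,
otherwise return `false` leaving the list unchanged. -/
noncomputable def listRemove (L : List E) (v : ℤ) : List E × Bool :=
  if iE v ∈ L then
    (L.takeWhile (fun y => decide (y < iE v)) ++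
       (L.dropWhile (fun y => decide (y < iE v))).tail, true)
  else (L, false)

theorem stmt6 (L : List E) (hchain : L.Chain' (· < ·))
    (hhead : L.head? = some ⊥) (hlast : L.getLast? = some ⊤) (v : ℤ) :
    ((listRemove L v).1.Chain' (· < ·)) ∧
    (∀ w : ℤ, iE w ∈ (listRemove L v).1 ↔ (iE w ∈ L ∧ w ≠ v)) ∧
    ((listRemove L v).2 = true ↔ iE v ∈ L) := by
  have hpw : L.Pairwise (· < ·) := List.isChain_iff_pairwise.mp hchain
  have hinj : ∀ a b : ℤ, iE a = iE b → a = b := by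
    intro a b h
    simpa [iE] using h
  by_cases hv : iE v ∈ L
  · have hpos : listRemove L v =
        (L.takeWhile (fun y => decide (y < iE v)) ++
          (L.dropWhile (fun y => decide (y < iE v))).tail, true) := by
      simp [listRemove, hv]
    set p : E → Bool := fun y => decide (y < iE v) with hp
    set T := L.takeWhile p with hT
    set D := L.dropWhile p with hD
    have hTD : T ++ D = L := List.takeWhile_append_dropWhile ..
    have hvD : iE v ∈ D := by
      rcases List.mem_append.mp (hTD ▸ hv) with h | h
      · exfalso
        have := List.mem_takeWhile_imp h
        simp [hp] at this
      · exact h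
    have hDne : D ≠ [] := List.ne_nil_of_mem hvD
    obtain ⟨a, tl, hDeq⟩ := List.exists_cons_of_ne_nil hDne
    have hnpa : ¬ (a < iE v) := by
      have h2 := List.head?_dropWhile_not p L
      rw [← hD, hDeq] at h2
      simpa [hp] using h2
    have hDpw : D.Pairwise (· < ·) := (List.pairwise_append.mp (hTD ▸ hpw)).2.1
    have hav : a = iE v := by
      have hmem : iE v ∈ a :: tl := hDeq ▸ hvD
      rcases List.mem_cons.mp hmem with h | h
      · exact h.symm
      · exact absurd ((List.pairwise_cons.mp (hDeq ▸ hDpw)).1 _ h) hnpa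
    have hsub : List.Sublist (T ++ D.tail) L := by
      rw [← hTD]
      exact (List.tail_sublist D).append_left T
    have hpw' : (T ++ D.tail).Pairwise (· < ·) := hpw.sublist hsub
    have hnd : L.Nodup := hpw.nodup
    refine ⟨?_, ?_, ?_⟩
    · rw [hpos]; exact List.isChain_iff_pairwise.mpr hpw'
    · intro w
      rw [hpos]
      simp only
      constructor
      · intro hw
        refine ⟨hsub.mem hw, ?_⟩
        intro hwv
        subst hwv
        rcases List.mem_append.mp hw with h | h
        · have := List.mem_takeWhile_imp h
          simp [hp] at this
        · have : D.Nodup := hnd.sublist (hTD ▸ (List.sublist_append_right T D))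
          rw [hDeq] at this h
          exact (List.nodup_cons.mp this).1 (hav ▸ h)
      · rintro ⟨hw, hwv⟩
        rcases List.mem_append.mp (hTD ▸ hw) with h | h
        · exact List.mem_append.mpr (Or.inl h)
        · rw [hDeq] at h
          rcases List.mem_cons.mp h with h | h
          · exact absurd (hinj _ _ (h.trans hav)) hwv
          · exact List.mem_append.mpr (Or.inr (by rw [hDeq]; exact h))
    · rw [hpos]; simpa using hv
  · have heq : listRemove L v = (L, false) := by simp [listRemove, hv]
    rw [heq]
    refine ⟨hchain, ?_, by simp [hv]⟩
    intro w
    exact ⟨fun hw => ⟨hw, fun hwv => hv (hwv ▸ hw)⟩, fun h => h.1⟩
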